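/- Let n ≥ 3 and let f₁, f₂, g be homogeneous polynomials of degree m in ℂ[z₁,…,zₙ]. If z_j·g ∈ ⟨f₁, f₂⟩ for every j = 1,…,n, then g ∈ ⟨f₁, f₂⟩. Equivalently, for n ≥ 3 the degree-(m+1) containment ⟨g⟩_{m+1} ⊆ ⟨f₁,f₂⟩_{m+1} with g ∉ ⟨f₁,f₂⟩ is impossible, so P = 2 cannot occur in Theorem 1.5 when n ≥ 3. -/

import Mathlib

open MvPolynomial UniqueFactorizationMonoid

private lemma tg_prime_X {k : ℕ} (i : Fin (k+1)) :
    Prime (X i : MvPolynomial (Fin (k+1)) ℂ) := by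
  have h0 : Prime (X 0 : MvPolynomial (Fin (k+1)) ℂ) := by
    rw [← MulEquiv.prime_iff (finSuccEquiv ℂ k).toRingEquiv.toMulEquiv]
    have : (finSuccEquiv ℂ k).toRingEquiv.toMulEquiv (X 0) = Polynomial.X := by
      simpa using finSuccEquiv_X_zero (R := ℂ) (n := k)
    rw [this]
    exact Polynomial.prime_X
  have := (MulEquiv.prime_iff (renameEquiv ℂ (Equiv.swap (0 : Fin (k+1)) i)).toRingEquiv.toMulEquiv).mpr h0
  simpa [renameEquiv, Equiv.swap_apply_left] using this

private lemma tg_mem_span_XX {N : ℕ} {a b t : Fin N}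
    (hta : t ≠ a) (htb : t ≠ b) {q : MvPolynomial (Fin N) ℂ}
    (hq : X t * q ∈ Ideal.span {X a, X b}) :
    q ∈ Ideal.span ({X a, X b} : Set (MvPolynomial (Fin N) ℂ)) := by
  have himg : ({X a, X b} : Set (MvPolynomial (Fin N) ℂ)) = X '' {a, b} := by
    simp [Set.image_insert_eq]
  rw [himg] at hq ⊢
  rw [mem_ideal_span_X_image] at hq ⊢
  intro m hm
  have hmem : (Finsupp.single t 1 + m) ∈ (X t * q).support := by
    rw [support_X_mul]
    exact Finset.mem_map.mpr ⟨m, hm, rfl⟩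
  obtain ⟨i, hi, hine⟩ := hq _ hmem
  refine ⟨i, hi, ?_⟩
  have : i ≠ t := by rintro rfl; rcases hi with rfl | rfl <;> simp_all
  simpa [Finsupp.single_apply_ne_zero, this, Ne.symm this] using hine

/-- The coprime case of the main argument (no homogeneity needed). -/
private lemma tg_coprime {k : ℕ} (hk : 3 ≤ k + 1)
    (f₁ f₂ g : MvPolynomial (Fin (k+1)) ℂ)
    (hcop : IsRelPrime f₁ f₂) (hf₂ : f₂ ≠ 0)
    (h : ∀ j : Fin (k+1), X j * g ∈ Ideal.span {f₁, f₂}) :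
    g ∈ Ideal.span ({f₁, f₂} : Set (MvPolynomial (Fin (k+1)) ℂ)) := by
  set a : Fin (k+1) := ⟨0, by omega⟩ with ha
  set b : Fin (k+1) := ⟨1, by omega⟩ with hb
  set t : Fin (k+1) := ⟨2, by omega⟩ with ht
  have hab : a ≠ b := by simp [ha, hb, Fin.ext_iff]
  have hta : t ≠ a := by simp [ha, ht, Fin.ext_iff]
  have htb : t ≠ b := by simp [hb, ht, Fin.ext_iff]
  obtain ⟨L₀, M₀, h0⟩ := Ideal.mem_span_pair.mp (h a)
  obtain ⟨L₁, M₁, h1⟩ := Ideal.mem_span_pair.mp (h b)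
  obtain ⟨L₂, M₂, h2⟩ := Ideal.mem_span_pair.mp (h t)
  -- syzygy relations
  have hD01 : (X b * L₀ - X a * L₁) * f₁ = (X a * M₁ - X b * M₀) * f₂ := by
    linear_combination (X b : MvPolynomial (Fin (k+1)) ℂ) * h0 -
      (X a : MvPolynomial (Fin (k+1)) ℂ) * h1
  have hD02 : (X t * L₀ - X a * L₂) * f₁ = (X a * M₂ - X t * M₀) * f₂ := by
    linear_combination (X t : MvPolynomial (Fin (k+1)) ℂ) * h0 -
      (X a : MvPolynomial (Fin (k+1)) ℂ) * h2
  have hD12 : (X t * L₁ - X b * L₂) * f₁ = (X b * M₂ - X t * M₁) * f₂ := by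
    linear_combination (X t : MvPolynomial (Fin (k+1)) ℂ) * h1 -
      (X b : MvPolynomial (Fin (k+1)) ℂ) * h2
  -- f₂ divides each `D`
  have hdvd : ∀ D E : MvPolynomial (Fin (k+1)) ℂ, D * f₁ = E * f₂ → f₂ ∣ D := by
    intro D E hDE
    exact hcop.symm.dvd_of_dvd_mul_right ⟨E, by linear_combination hDE⟩
  obtain ⟨q01, hq01⟩ := hdvd _ _ hD01
  obtain ⟨q02, hq02⟩ := hdvd _ _ hD02
  obtain ⟨q12, hq12⟩ := hdvd _ _ hD12
  -- a Jacobi-type identity forces `q01 ∈ (X a, X b)`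
  have key : X t * q01 = X b * q02 - X a * q12 := by
    have h5 : f₂ * (X t * q01) = f₂ * (X b * q02 - X a * q12) := by
      linear_combination -((X t : MvPolynomial (Fin (k+1)) ℂ) * hq01) +
        (X b : MvPolynomial (Fin (k+1)) ℂ) * hq02 -
        (X a : MvPolynomial (Fin (k+1)) ℂ) * hq12
    exact mul_left_cancel₀ hf₂ h5
  have hq01mem : q01 ∈ Ideal.span ({X a, X b} : Set (MvPolynomial (Fin (k+1)) ℂ)) := by
    refine tg_mem_span_XX hta htb ?_
    rw [key]
    exact Ideal.sub_mem _ (Ideal.mem_span_pair.mpr ⟨0, q02, by ring⟩)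
      (Ideal.mem_span_pair.mpr ⟨q12, 0, by ring⟩)
  obtain ⟨u, v, huv⟩ := Ideal.mem_span_pair.mp hq01mem
  have hprime : Prime (X a : MvPolynomial (Fin (k+1)) ℂ) := tg_prime_X a
  have hXab : ¬ (X a : MvPolynomial (Fin (k+1)) ℂ) ∣ X b := by
    rw [X_dvd_X]; exact hab
  have hw : (X a : MvPolynomial (Fin (k+1)) ℂ) ∣ (L₀ - v * f₂) := by
    have hdd : (X a : MvPolynomial (Fin (k+1)) ℂ) ∣ X b * (L₀ - v * f₂) :=
      ⟨L₁ + u * f₂, by linear_combination hq01 - f₂ * huv⟩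
    exact (hprime.2.2 _ _ hdd).resolve_left hXab
  obtain ⟨w, hw⟩ := hw
  have hE : X a * M₁ - X b * M₀ = q01 * f₁ := by
    have h6 : f₂ * (X a * M₁ - X b * M₀) = f₂ * (q01 * f₁) := by
      linear_combination f₁ * hq01 - hD01
    exact mul_left_cancel₀ hf₂ h6
  have hw' : (X a : MvPolynomial (Fin (k+1)) ℂ) ∣ (M₀ + v * f₁) := by
    have hdd : (X a : MvPolynomial (Fin (k+1)) ℂ) ∣ X b * (M₀ + v * f₁) :=
      ⟨M₁ - u * f₁, by linear_combination f₁ * huv - hE⟩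
    exact (hprime.2.2 _ _ hdd).resolve_left hXab
  obtain ⟨w', hw'⟩ := hw'
  have hfin : X a * g = X a * (w * f₁ + w' * f₂) := by
    linear_combination -h0 + f₁ * hw + f₂ * hw'
  have := mul_left_cancel₀ (X_ne_zero a) hfin
  exact Ideal.mem_span_pair.mpr ⟨w, w', this.symm⟩

private lemma tg_card_le {α : Type*} [CommMonoidWithZero α] [NormalizationMonoid α]
    [UniqueFactorizationMonoid α] {p f f' : α} (hp : Irreducible p) (hf : f = p * f') :
    Multiset.card (normalizedFactors f') ≤ Multiset.card (normalizedFactors f) ∧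
      (f ≠ 0 → Multiset.card (normalizedFactors f') < Multiset.card (normalizedFactors f)) := by
  by_cases h0 : f = 0
  · have : f' = 0 := by
      rcases mul_eq_zero.mp (hf ▸ h0) with h | h
      · exact absurd h hp.ne_zero
      · exact h
    simp [h0, this]
  · have hf'0 : f' ≠ 0 := by rintro rfl; exact h0 (by simp [hf])
    subst hf
    rw [normalizedFactors_mul hp.ne_zero hf'0, Multiset.card_add,
      normalizedFactors_irreducible hp]
    exact ⟨by simp, fun _ => by simp⟩

private lemma tg_main {k : ℕ} (hk : 3 ≤ k + 1)
    (f₁ f₂ g : MvPolynomial (Fin (k+1)) ℂ)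
    (h : ∀ j : Fin (k+1), X j * g ∈ Ideal.span {f₁, f₂}) :
    g ∈ Ideal.span ({f₁, f₂} : Set (MvPolynomial (Fin (k+1)) ℂ)) := by
  classical
  letI : NormalizationMonoid (MvPolynomial (Fin (k+1)) ℂ) :=
    UniqueFactorizationMonoid.normalizationMonoid.toNormalizationMonoid
  suffices H : ∀ N (f₁ f₂ g : MvPolynomial (Fin (k+1)) ℂ),
      Multiset.card (normalizedFactors f₁) + Multiset.card (normalizedFactors f₂) ≤ N →
      (∀ j : Fin (k+1), X j * g ∈ Ideal.span {f₁, f₂}) →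
      g ∈ Ideal.span ({f₁, f₂} : Set (MvPolynomial (Fin (k+1)) ℂ)) by
    exact H _ f₁ f₂ g le_rfl h
  intro N
  induction N using Nat.strong_induction_on with
  | _ N ih =>
  intro f₁ f₂ g hcard h
  set a : Fin (k+1) := ⟨0, by omega⟩ with ha
  set b : Fin (k+1) := ⟨1, by omega⟩ with hb
  have hab : a ≠ b := by simp [ha, hb, Fin.ext_iff]
  by_cases hzero : f₁ = 0 ∧ f₂ = 0
  · obtain ⟨rfl, rfl⟩ := hzero
    have hsp : Ideal.span ({(0:MvPolynomial (Fin (k+1)) ℂ), (0:MvPolynomial (Fin (k+1)) ℂ)} : Set (MvPolynomial (Fin (k+1)) ℂ)) = ⊥ := by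
      rw [Set.pair_eq_singleton]
      exact Ideal.span_singleton_eq_bot.mpr rfl
    have h0 := h a
    rw [hsp, Ideal.mem_bot] at h0
    have hg0 : g = 0 := by
      rcases mul_eq_zero.mp h0 with hx | hx
      · exact absurd hx (X_ne_zero a)
      · exact hx
    rw [hg0]
    exact Ideal.zero_mem _
  by_cases hcop : IsRelPrime f₁ f₂
  · by_cases hf₂ : f₂ = 0
    · subst hf₂
      have hunit : IsUnit f₁ := hcop dvd_rfl (dvd_zero f₁)
      have htop : Ideal.span ({f₁, (0:MvPolynomial (Fin (k+1)) ℂ)} : Set (MvPolynomial (Fin (k+1)) ℂ)) = ⊤ :=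
        Ideal.eq_top_of_isUnit_mem _ (Ideal.subset_span (by simp)) hunit
      rw [htop]; trivial
    · exact tg_coprime hk f₁ f₂ g hcop hf₂ h
  · -- there is a common irreducible factor; factor it out and recurse
    simp only [IsRelPrime, not_forall] at hcop
    obtain ⟨d, hd₁, hd₂, hdu⟩ := hcop
    have hd0 : d ≠ 0 := by
      rintro rfl
      exact hzero ⟨zero_dvd_iff.mp hd₁, zero_dvd_iff.mp hd₂⟩
    obtain ⟨p, hpirr, hpd⟩ := WfDvdMonoid.exists_irreducible_factor hdu hd0
    have hpprime : Prime p := irreducible_iff_prime.mp hpirr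
    obtain ⟨f₁', hf₁'⟩ := hpd.trans hd₁
    obtain ⟨f₂', hf₂'⟩ := hpd.trans hd₂
    have hpg : p ∣ g := by
      have hdvdg : ∀ j : Fin (k+1), p ∣ X j * g := by
        intro j
        obtain ⟨A, B, hAB⟩ := Ideal.mem_span_pair.mp (h j)
        exact ⟨A * f₁' + B * f₂', by linear_combination -hAB + A * hf₁' + B * hf₂'⟩
      rcases hpprime.2.2 _ _ (hdvdg a) with hpa | hpg
      · rcases hpprime.2.2 _ _ (hdvdg b) with hpb | hpg
        · exfalso
          have hXa : (X a : MvPolynomial (Fin (k+1)) ℂ) ∣ p :=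
            (hpirr.associated_of_dvd (tg_prime_X a).irreducible hpa).symm.dvd
          exact hab (X_dvd_X.mp (hXa.trans hpb))
        · exact hpg
      · exact hpg
    obtain ⟨g', hg'⟩ := hpg
    have h' : ∀ j : Fin (k+1), X j * g' ∈ Ideal.span ({f₁', f₂'} : Set (MvPolynomial (Fin (k+1)) ℂ)) := by
      intro j
      obtain ⟨A, B, hAB⟩ := Ideal.mem_span_pair.mp (h j)
      refine Ideal.mem_span_pair.mpr ⟨A, B, ?_⟩
      have hcancel : p * (A * f₁' + B * f₂') = p * (X j * g') := by
        linear_combination hAB - A * hf₁' - B * hf₂' + X j * hg'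
      exact mul_left_cancel₀ hpprime.ne_zero hcancel
    have hc1 := tg_card_le hpirr hf₁'
    have hc2 := tg_card_le hpirr hf₂'
    have hne : f₁ ≠ 0 ∨ f₂ ≠ 0 := by
      by_contra hcon; push_neg at hcon; exact hzero ⟨hcon.1, hcon.2⟩
    have hlt : Multiset.card (normalizedFactors f₁') +
        Multiset.card (normalizedFactors f₂') < N := by
      rcases hne with hne | hne
      · have := hc1.2 hne; omega
      · have := hc2.2 hne; omega
    have hg'mem := ih _ hlt f₁' f₂' g' (by omega) h'
    obtain ⟨A, B, hAB⟩ := Ideal.mem_span_pair.mp hg'mem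
    exact Ideal.mem_span_pair.mpr ⟨A, B, by
      linear_combination p * hAB - hg' + A * hf₁' + B * hf₂'⟩

/-- the case `P = 2`, `n ≥ 3`. If `n ≥ 3` and `f₁, f₂, g` are
homogeneous of degree `m` with `z_j·g ∈ ⟨f₁, f₂⟩` for every `j`, then `g ∈ ⟨f₁, f₂⟩`;
so `P = 2` cannot occur when `n ≥ 3`. -/
theorem two_generated_case (n m : ℕ) (hn : 3 ≤ n)
    (f₁ f₂ g : MvPolynomial (Fin n) ℂ)
    (hf₁ : f₁.IsHomogeneous m) (hf₂ : f₂.IsHomogeneous m) (hg : g.IsHomogeneous m)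
    (h : ∀ j : Fin n, X j * g ∈ Ideal.span {f₁, f₂}) : g ∈ Ideal.span {f₁, f₂} := by
  obtain ⟨k, rfl⟩ : ∃ k, n = k + 1 := ⟨n - 1, by omega⟩
  exact tg_main hn f₁ f₂ g h
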